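/- For 0 < k < 1, the function k ↦ (K(k) − E(k))·(E(k)/√(1 − k²) − √(1 − k²)·K(k)) is differentiable with derivative (k/√(1 − k²))³·E(k)·K(k); equivalently, ∫ (k/k')³ E(k) K(k) dk = (K(k) − E(k))(E(k)/k' − k'·K(k)). -/

import Mathlib

open Real

/-- The complete elliptic integral of the first kind,
`K(k) = ∫₀^{π/2} (1 − k² sin²θ)^{−1/2} dθ`. -/
noncomputable def ellipticK (k : ℝ) : ℝ :=
  ∫ θ in (0:ℝ)..(π / 2), (1 - k ^ 2 * Real.sin θ ^ 2) ^ (-(1:ℝ) / 2)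

/-- The complete elliptic integral of the second kind,
`E(k) = ∫₀^{π/2} (1 − k² sin²θ)^{1/2} dθ`. -/
noncomputable def ellipticE (k : ℝ) : ℝ :=
  ∫ θ in (0:ℝ)..(π / 2), (1 - k ^ 2 * Real.sin θ ^ 2) ^ ((1:ℝ) / 2)



lemma Xpos {k : ℝ} (hk : k^2 < 1) (θ : ℝ) : 0 < 1 - k^2 * Real.sin θ^2 := by
  nlinarith [Real.sin_sq_le_one θ, sq_nonneg k, sq_nonneg (Real.sin θ)]

lemma contX {k : ℝ} (hk : k^2 < 1) (p : ℝ) :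
    Continuous fun θ : ℝ => (1 - k^2 * Real.sin θ^2) ^ p := by
  apply Continuous.rpow_const (by continuity) (fun θ => Or.inl (Xpos hk θ).ne')

lemma intgX {k : ℝ} (hk : k^2 < 1) (p : ℝ) :
    IntervalIntegrable (fun θ : ℝ => (1 - k^2 * Real.sin θ^2) ^ p) MeasureTheory.volume 0 (π/2) :=
  (contX hk p).intervalIntegrable _ _

lemma hasDerivAt_param (p : ℝ) (hp : p ≤ 1) {k : ℝ} (hk0 : 0 < k) (hk1 : k < 1) :
    HasDerivAt (fun x : ℝ => ∫ θ in (0:ℝ)..(π/2), (1 - x^2 * Real.sin θ^2) ^ p)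
      (∫ θ in (0:ℝ)..(π/2),
        p * (1 - k^2 * Real.sin θ^2) ^ (p-1) * (-(2*k) * Real.sin θ^2)) k := by
  have hk2 : k^2 < 1 := by nlinarith
  set b : ℝ := (1+k)/2 with hb
  have hb0 : 0 < b := by positivity
  have hb1 : b < 1 := by rw [hb]; linarith
  have hbsq : b^2 < 1 := by nlinarith
  set ε : ℝ := min (k/2) ((1-k)/2) with hε
  have hε0 : 0 < ε := lt_min (by linarith) (by linarith)
  have hball : ∀ x ∈ Metric.ball k ε, 0 < x ∧ x < b ∧ x^2 < 1 := by
    intro x hx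
    rw [Metric.mem_ball, Real.dist_eq, abs_lt] at hx
    have h1 := min_le_left (k/2) ((1-k)/2)
    have h2 := min_le_right (k/2) ((1-k)/2)
    refine ⟨by linarith, by rw [hb]; linarith, ?_⟩
    nlinarith
  refine (intervalIntegral.hasDerivAt_integral_of_dominated_loc_of_deriv_le
    (F := fun x θ => (1 - x^2 * Real.sin θ^2) ^ p)
    (F' := fun x θ => p * (1 - x^2 * Real.sin θ^2) ^ (p-1) * (-(2*x) * Real.sin θ^2))
    (bound := fun _ => |p| * (1-b^2)^(p-1) * (2*b))
    (Metric.ball_mem_nhds k hε0) ?_ ?_ ?_ ?_ ?_ ?_).2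
  · filter_upwards [Metric.ball_mem_nhds k hε0] with x hx
    exact ((contX (hball x hx).2.2 p).aestronglyMeasurable)
  · exact intgX hk2 p
  · exact ((continuous_const.mul (contX hk2 (p-1))).mul
      (continuous_const.mul (Real.continuous_sin.pow 2))).aestronglyMeasurable
  · apply Filter.Eventually.of_forall
    intro θ _ x hx
    obtain ⟨hx0, hxb, hx2⟩ := hball x hx
    have hXpos := Xpos hx2 θ
    have hXge : 1 - b^2 ≤ 1 - x^2 * Real.sin θ^2 := by
      nlinarith [Real.sin_sq_le_one θ, sq_nonneg (Real.sin θ)]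
    have h1 : (1 - x^2 * Real.sin θ^2) ^ (p-1) ≤ (1-b^2)^(p-1) :=
      Real.rpow_le_rpow_of_nonpos (by linarith) hXge (by linarith)
    have h2 : |(-(2*x) * Real.sin θ^2)| ≤ 2*b := by
      rw [abs_mul, abs_neg, abs_mul]
      have := Real.sin_sq_le_one θ
      have hs : |Real.sin θ^2| = Real.sin θ^2 := abs_of_nonneg (sq_nonneg _)
      rw [hs, abs_of_nonneg (by norm_num : (0:ℝ) ≤ 2), abs_of_pos hx0]
      nlinarith [sq_nonneg (Real.sin θ)]
    calc ‖p * (1 - x^2 * Real.sin θ^2) ^ (p-1) * (-(2*x) * Real.sin θ^2)‖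
        = |p| * (1 - x^2 * Real.sin θ^2) ^ (p-1) * |(-(2*x) * Real.sin θ^2)| := by
          rw [Real.norm_eq_abs, abs_mul, abs_mul, abs_of_nonneg (Real.rpow_nonneg hXpos.le _)]
      _ ≤ |p| * (1-b^2)^(p-1) * (2*b) := by
          apply mul_le_mul (mul_le_mul le_rfl h1 (Real.rpow_nonneg hXpos.le _) (abs_nonneg _)) h2
            (abs_nonneg _)
          exact mul_nonneg (abs_nonneg _) (Real.rpow_nonneg (by linarith) _)
  · exact intervalIntegrable_const
  · apply Filter.Eventually.of_forall
    intro θ _ x hx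
    obtain ⟨hx0, hxb, hx2⟩ := hball x hx
    have hinner : HasDerivAt (fun x : ℝ => 1 - x^2 * Real.sin θ^2)
        (-(2*x) * Real.sin θ^2) x := by
      have h := ((hasDerivAt_pow 2 x).mul_const (Real.sin θ^2)).const_sub 1
      refine h.congr_deriv ?_
      push_cast
      ring
    have := hinner.rpow_const (p := p) (Or.inl (Xpos hx2 θ).ne')
    refine this.congr_deriv ?_
    ring

/-- `(1-k²)·∫ X^{-3/2} = E(k)` via FTC. -/
lemma int32 {k : ℝ} (hk2 : k^2 < 1) :
    (1-k^2) * ∫ θ in (0:ℝ)..(π/2), (1 - k^2 * Real.sin θ^2) ^ (-(3:ℝ)/2) = ellipticE k := by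
  have hder : ∀ θ ∈ Set.uIcc (0:ℝ) (π/2),
      HasDerivAt (fun θ => k^2 * (Real.sin θ * Real.cos θ) *
          (1 - k^2 * Real.sin θ^2) ^ (-(1:ℝ)/2))
        ((1 - k^2 * Real.sin θ^2) ^ ((1:ℝ)/2)
          - (1-k^2) * (1 - k^2 * Real.sin θ^2) ^ (-(3:ℝ)/2)) θ := by
    intro θ _
    have hX := Xpos hk2 θ
    have h1 : HasDerivAt (fun θ => Real.sin θ * Real.cos θ)
        (Real.cos θ * Real.cos θ + Real.sin θ * (-Real.sin θ)) θ :=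
      (Real.hasDerivAt_sin θ).mul (Real.hasDerivAt_cos θ)
    have h2 : HasDerivAt (fun θ : ℝ => 1 - k^2 * Real.sin θ^2)
        (-(k^2 * (2 * Real.sin θ * Real.cos θ))) θ := by
      have h := (((Real.hasDerivAt_sin θ).pow 2).const_mul (k^2)).const_sub 1
      refine h.congr_deriv ?_
      push_cast
      ring
    have h3 := h2.rpow_const (p := -(1:ℝ)/2) (Or.inl hX.ne')
    have h4 := (h1.const_mul (k^2)).mul h3
    refine h4.congr_deriv ?_
    symm
    have e1 : (1 - k^2 * Real.sin θ^2) ^ (-(1:ℝ)/2 - 1)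
        = (1 - k^2 * Real.sin θ^2) ^ (-(3:ℝ)/2) := by norm_num
    have e2 : (1 - k^2 * Real.sin θ^2) ^ (-(1:ℝ)/2)
        = (1 - k^2 * Real.sin θ^2) * (1 - k^2 * Real.sin θ^2) ^ (-(3:ℝ)/2) := by
      rw [← Real.rpow_one_add' hX.le (by norm_num : (1:ℝ) + -(3:ℝ)/2 ≠ 0)]
      norm_num
    have e3 : (1 - k^2 * Real.sin θ^2) ^ ((1:ℝ)/2)
        = (1 - k^2 * Real.sin θ^2)^2 * (1 - k^2 * Real.sin θ^2) ^ (-(3:ℝ)/2) := by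
      have e : ((1 - k^2*Real.sin θ^2):ℝ)^(2:ℕ) = (1 - k^2*Real.sin θ^2) ^ ((2:ℕ):ℝ) :=
        (Real.rpow_natCast _ 2).symm
      rw [e, ← Real.rpow_add hX]
      norm_num
    rw [e1, e2, e3]
    linear_combination (-(k^2 * (1 - k^2 * Real.sin θ^2) ^ (-(3:ℝ)/2))) *
      Real.sin_sq_add_cos_sq θ
  have hint : IntervalIntegrable (fun θ => (1 - k^2 * Real.sin θ^2) ^ ((1:ℝ)/2)
      - (1-k^2) * (1 - k^2 * Real.sin θ^2) ^ (-(3:ℝ)/2)) MeasureTheory.volume 0 (π/2) :=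
    (intgX hk2 _).sub ((intgX hk2 _).const_mul _)
  have h := intervalIntegral.integral_eq_sub_of_hasDerivAt hder hint
  rw [intervalIntegral.integral_sub (intgX hk2 _) ((intgX hk2 _).const_mul _),
    intervalIntegral.integral_const_mul] at h
  simp [Real.cos_pi_div_two] at h
  rw [ellipticE]
  linarith [h]

lemma hasDerivAt_ellipticE {k : ℝ} (hk0 : 0 < k) (hk1 : k < 1) :
    HasDerivAt ellipticE ((ellipticE k - ellipticK k)/k) k := by
  have hk2 : k^2 < 1 := by nlinarith
  have h := hasDerivAt_param (1/2) (by norm_num) hk0 hk1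
  have hA : (∫ θ in (0:ℝ)..(π/2),
        (1/2 : ℝ) * (1 - k^2*Real.sin θ^2)^((1:ℝ)/2-1) * (-(2*k)*Real.sin θ^2))
      = -(1/k) * ∫ θ in (0:ℝ)..(π/2),
        k^2 * Real.sin θ^2 * (1 - k^2*Real.sin θ^2)^(-(1:ℝ)/2) := by
    rw [← intervalIntegral.integral_const_mul]
    apply intervalIntegral.integral_congr
    intro θ _
    have e : ((1:ℝ)/2 - 1) = -(1:ℝ)/2 := by norm_num
    rw [e]
    field_simp
  have hKE : (∫ θ in (0:ℝ)..(π/2),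
        k^2 * Real.sin θ^2 * (1 - k^2*Real.sin θ^2)^(-(1:ℝ)/2))
      = ellipticK k - ellipticE k := by
    rw [ellipticK, ellipticE, ← intervalIntegral.integral_sub (intgX hk2 _) (intgX hk2 _)]
    apply intervalIntegral.integral_congr
    intro θ _
    dsimp only
    have hX := Xpos hk2 θ
    have e2 : (1 - k^2*Real.sin θ^2)^((1:ℝ)/2)
        = (1 - k^2*Real.sin θ^2) * (1 - k^2*Real.sin θ^2)^(-(1:ℝ)/2) := by
      rw [← Real.rpow_one_add' hX.le (by norm_num : (1:ℝ) + -(1:ℝ)/2 ≠ 0)]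
      norm_num
    rw [e2]
    ring
  rw [hA, hKE] at h
  have h' : HasDerivAt ellipticE (-(1/k) * (ellipticK k - ellipticE k)) k := h
  convert h' using 1
  field_simp
  ring

lemma hasDerivAt_ellipticK {k : ℝ} (hk0 : 0 < k) (hk1 : k < 1) :
    HasDerivAt ellipticK ((ellipticE k / (1-k^2) - ellipticK k)/k) k := by
  have hk2 : k^2 < 1 := by nlinarith
  have h := hasDerivAt_param (-1/2) (by norm_num) hk0 hk1
  have hA : (∫ θ in (0:ℝ)..(π/2),
        (-1/2 : ℝ) * (1 - k^2*Real.sin θ^2)^((-1:ℝ)/2-1) * (-(2*k)*Real.sin θ^2))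
      = (1/k) * ∫ θ in (0:ℝ)..(π/2),
        k^2 * Real.sin θ^2 * (1 - k^2*Real.sin θ^2)^(-(3:ℝ)/2) := by
    rw [← intervalIntegral.integral_const_mul]
    apply intervalIntegral.integral_congr
    intro θ _
    have e : ((-1:ℝ)/2 - 1) = -(3:ℝ)/2 := by norm_num
    rw [e]
    field_simp
  have hKB : (∫ θ in (0:ℝ)..(π/2),
        k^2 * Real.sin θ^2 * (1 - k^2*Real.sin θ^2)^(-(3:ℝ)/2))
      = (∫ θ in (0:ℝ)..(π/2), (1 - k^2*Real.sin θ^2)^(-(3:ℝ)/2)) - ellipticK k := by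
    rw [ellipticK, ← intervalIntegral.integral_sub (intgX hk2 _) (intgX hk2 _)]
    apply intervalIntegral.integral_congr
    intro θ _
    dsimp only
    have hX := Xpos hk2 θ
    have e2 : (1 - k^2*Real.sin θ^2)^(-(1:ℝ)/2)
        = (1 - k^2*Real.sin θ^2) * (1 - k^2*Real.sin θ^2)^(-(3:ℝ)/2) := by
      rw [← Real.rpow_one_add' hX.le (by norm_num : (1:ℝ) + -(3:ℝ)/2 ≠ 0)]
      norm_num
    rw [e2]
    ring
  have hC : (∫ θ in (0:ℝ)..(π/2), (1 - k^2*Real.sin θ^2)^(-(3:ℝ)/2))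
      = ellipticE k / (1-k^2) := by
    rw [eq_div_iff (by nlinarith : (1:ℝ)-k^2 ≠ 0)]
    rw [← int32 hk2]
    ring
  rw [hA, hKB, hC] at h
  have h' : HasDerivAt ellipticK ((1/k) * (ellipticE k / (1-k^2) - ellipticK k)) k := h
  convert h' using 1
  field_simp


/-- `∫ (k/k')³·E(k)·K(k) dk = (K(k) − E(k))·(E(k)/k' − k'·K(k))` for `0 < k < 1`,
where `k' = √(1 − k²)`. -/
theorem stmt_18 :
    ∀ k : ℝ, 0 < k → k < 1 →
      HasDerivAt
        (fun t => (ellipticK t - ellipticE t) *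
          (ellipticE t / Real.sqrt (1 - t ^ 2) - Real.sqrt (1 - t ^ 2) * ellipticK t))
        ((k / Real.sqrt (1 - k ^ 2)) ^ 3 * ellipticE k * ellipticK k) k := by
  intro k hk0 hk1
  have hk2 : k^2 < 1 := by nlinarith
  have h1k2 : (0:ℝ) < 1 - k^2 := by linarith
  set c : ℝ := Real.sqrt (1 - k^2) with hc
  have hc2 : c^2 = 1 - k^2 := Real.sq_sqrt h1k2.le
  have hc0 : 0 < c := Real.sqrt_pos.mpr h1k2
  have hE := hasDerivAt_ellipticE hk0 hk1
  have hK := hasDerivAt_ellipticK hk0 hk1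
  have hsq : HasDerivAt (fun t : ℝ => Real.sqrt (1 - t^2)) (-(2*k^1) / (2*c)) k := by
    have hin : HasDerivAt (fun t : ℝ => 1 - t^2) (-(2*k^1)) k := by
      have := (hasDerivAt_pow 2 k).const_sub 1
      refine this.congr_deriv ?_
      norm_num
    exact hin.sqrt h1k2.ne'
  have hq : HasDerivAt (fun t => ellipticE t / Real.sqrt (1 - t^2))
      (((ellipticE k - ellipticK k)/k * c - ellipticE k * (-(2*k^1) / (2*c))) / c^2) k :=
    hE.div hsq hc0.ne'
  have hm : HasDerivAt (fun t => Real.sqrt (1 - t^2) * ellipticK t)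
      ((-(2*k^1) / (2*c)) * ellipticK k
        + c * ((ellipticE k / (1-k^2) - ellipticK k)/k)) k :=
    hsq.mul hK
  have hfull := ((hK.sub hE).mul (hq.sub hm))
  have hgoal : HasDerivAt
      (fun t => (ellipticK t - ellipticE t) *
        (ellipticE t / Real.sqrt (1 - t ^ 2) - Real.sqrt (1 - t ^ 2) * ellipticK t))
      (((ellipticE k / (1-k^2) - ellipticK k)/k - (ellipticE k - ellipticK k)/k) *
          (ellipticE k / c - c * ellipticK k)
        + (ellipticK k - ellipticE k) *
          ((((ellipticE k - ellipticK k)/k * c - ellipticE k * (-(2*k^1) / (2*c))) / c^2)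
            - ((-(2*k^1) / (2*c)) * ellipticK k
                + c * ((ellipticE k / (1-k^2) - ellipticK k)/k)))) k := by
    exact hfull
  convert hgoal using 1
  rw [show (1:ℝ) - k^2 = c^2 from hc2.symm]
  field_simp
  rw [hc2]
  ring
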